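/- Let G be a simple graph of order n ≥ 7 with exactly k vertices of degree n-1, where k = 1 or k = 2, and at least one vertex of degree n-2. Then q_n(G) ≥ 2k/(n-2). -/

import Mathlib

set_option maxHeartbeats 1600000



lemma slapAux_perw1 (m a b t : ℝ) (hm : 5 ≤ m) :
    2/m*t^2 + (a^2 + b^2 - (a+b)^2/(2 - 2/m)) ≤ (a+t)^2 + (b+t)^2 := by
  have hm0 : (0:ℝ) < m := by linarith
  have h2 : (0:ℝ) < 2*m - 2 := by linarith
  have hne1 : m ≠ 0 := ne_of_gt hm0
  have hne2 : 2*m - 2 ≠ 0 := ne_of_gt h2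
  have hne3 : 2 - 2/m ≠ 0 := by
    rw [sub_ne_zero]; intro h; field_simp at h; linarith
  have key : (a+t)^2 + (b+t)^2 - (2/m*t^2 + (a^2 + b^2 - (a+b)^2/(2 - 2/m)))
      = (2*m-2)/m * (t + m*(a+b)/(2*m-2))^2 := by
    have hm1 : m - 1 ≠ 0 := by intro h; apply hne2; linear_combination 2*h
    field_simp
    ring
  nlinarith [mul_nonneg (div_nonneg h2.le hm0.le) (sq_nonneg (t + m*(a+b)/(2*m-2)))]

lemma slapAux_perw2 (m a1 a2 b t : ℝ) (hm : 5 ≤ m) :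
    4/m*t^2 + (a1^2 + a2^2 + b^2 - (a1+a2+b)^2/(3 - 4/m)) ≤ (a1+t)^2 + (a2+t)^2 + (b+t)^2 := by
  have hm0 : (0:ℝ) < m := by linarith
  have h3 : (0:ℝ) < 3*m - 4 := by linarith
  have hne1 : m ≠ 0 := ne_of_gt hm0
  have hne2 : 3*m - 4 ≠ 0 := ne_of_gt h3
  have hne3 : 3 - 4/m ≠ 0 := by
    rw [sub_ne_zero]; intro h; field_simp at h; linarith
  have key : (a1+t)^2 + (a2+t)^2 + (b+t)^2
        - (4/m*t^2 + (a1^2 + a2^2 + b^2 - (a1+a2+b)^2/(3 - 4/m)))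
      = (3*m-4)/m * (t + m*(a1+a2+b)/(3*m-4))^2 := by
    have hm34' : m*3 - 4 ≠ 0 := by intro h; apply hne2; linarith
    field_simp
    ring
  nlinarith [mul_nonneg (div_nonneg h3.le hm0.le) (sq_nonneg (t + m*(a1+a2+b)/(3*m-4)))]

lemma slapAux_final1 (m a b s : ℝ) (hm : 5 ≤ m) :
    2/m*(a^2 + b^2 + s^2) ≤ (a+b)^2 + (a+s)^2 + (m-1)*(a^2 + b^2 - (a+b)^2/(2 - 2/m)) := by
  have hm0 : (0:ℝ) < m := by linarith
  have hm2 : (0:ℝ) < m - 2 := by linarith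
  have hw : (0:ℝ) ≤ m - 5 := by linarith
  have hne1 : m ≠ 0 := ne_of_gt hm0
  have hne2 : m - 2 ≠ 0 := ne_of_gt hm2
  have hne3 : 2 - 2/m ≠ 0 := by
    rw [sub_ne_zero]; intro h; field_simp at h; linarith
  have h22 : (2:ℝ) - 2/m = (2*m-2)/m := by field_simp
  have hne6 : 2*m - 2 ≠ 0 := by intro h; linarith
  have key : (a+b)^2 + (a+s)^2 + (m-1)*(a^2 + b^2 - (a+b)^2/(2 - 2/m)) - 2/m*(a^2+b^2+s^2)
      = (m-2)/m * (s + m*a/(m-2))^2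
        + (1/(2*m*(m-2))) * ((m^3-2*m^2-8*m+8)*a^2 + 2*(-m^3+4*m^2-4*m)*a*b
            + (m^3-2*m^2-4*m+8)*b^2) := by
    rw [h22, div_div_eq_mul_div]
    have hm1 : m - 1 ≠ 0 := by intro h; apply hne6; linear_combination 2*h
    field_simp
    ring
  have hA : (0:ℝ) < m^3-2*m^2-8*m+8 := by nlinarith [pow_nonneg hw 3, sq_nonneg (m-5)]
  have hdet : (0:ℝ) ≤ 4*m^5-32*m^4+72*m^3-16*m^2-96*m+64 := by
    nlinarith [pow_nonneg hw 5, pow_nonneg hw 4, pow_nonneg hw 3, sq_nonneg (m-5)]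
  have hq : (0:ℝ) ≤ (m^3-2*m^2-8*m+8)*a^2 + 2*(-m^3+4*m^2-4*m)*a*b + (m^3-2*m^2-4*m+8)*b^2 := by
    nlinarith [sq_nonneg ((m^3-2*m^2-8*m+8)*a + (-m^3+4*m^2-4*m)*b),
      mul_nonneg hdet (sq_nonneg b), hA]
  nlinarith [mul_nonneg (div_nonneg hm2.le hm0.le) (sq_nonneg (s + m*a/(m-2))),
    mul_nonneg (div_nonneg (by norm_num : (0:ℝ) ≤ 1) (by positivity : (0:ℝ) ≤ 2*m*(m-2))) hq]

lemma slapAux_final2 (m a1 a2 b s : ℝ) (hm : 5 ≤ m) :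
    4/m*(a1^2 + a2^2 + b^2 + s^2) ≤ (a1+a2)^2 + (a1+b)^2 + (a2+b)^2 + (a1+s)^2 + (a2+s)^2
      + (m-2)*(a1^2 + a2^2 + b^2 - (a1+a2+b)^2/(3 - 4/m)) := by
  have hm0 : (0:ℝ) < m := by linarith
  have hm2 : (0:ℝ) < m - 2 := by linarith
  have hm34 : (0:ℝ) < 3*m - 4 := by linarith
  have hw : (0:ℝ) ≤ m - 5 := by linarith
  have hne1 : m ≠ 0 := ne_of_gt hm0
  have hne2 : m - 2 ≠ 0 := ne_of_gt hm2
  have hne4 : 3*m - 4 ≠ 0 := ne_of_gt hm34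
  have hne5 : 2*m - 4 ≠ 0 := by intro h; linarith
  have hne3 : 3 - 4/m ≠ 0 := by
    rw [sub_ne_zero]; intro h; field_simp at h; linarith
  have key : (a1+a2)^2 + (a1+b)^2 + (a2+b)^2 + (a1+s)^2 + (a2+s)^2
        + (m-2)*(a1^2 + a2^2 + b^2 - (a1+a2+b)^2/(3 - 4/m)) - 4/m*(a1^2+a2^2+b^2+s^2)
      = (2*m-4)/m * (s + m*(a1+a2)/(2*m-4))^2
        + (1/(2*m*(3*m-4)*(m-2))) * ((3*m^4-10*m^3-4*m^2+40*m-32)*(a1-a2)^2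
            + ((m^4+m^3-28*m^2+56*m-32)*(a1+a2)^2
              + 2*(-2*m^4+14*m^3-28*m^2+16*m)*(a1+a2)*b
              + (4*m^4-12*m^3-16*m^2+80*m-64)*b^2)) := by
    have hm34' : m*3 - 4 ≠ 0 := by intro h; apply hne4; linarith
    have hm24' : m*2 - 4 ≠ 0 := by intro h; apply hne5; linarith
    field_simp
    ring
  have hbeta : (0:ℝ) ≤ 3*m^4-10*m^3-4*m^2+40*m-32 := by
    nlinarith [pow_nonneg hw 4, pow_nonneg hw 3, sq_nonneg (m-5)]
  have hAD : (0:ℝ) < m^4+m^3-28*m^2+56*m-32 := by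
    nlinarith [pow_nonneg hw 4, pow_nonneg hw 3, sq_nonneg (m-5)]
  have hdet : (0:ℝ) ≤ 48*m^7-448*m^6+1472*m^5-1568*m^4-1920*m^3+6528*m^2-6144*m+2048 := by
    nlinarith [pow_nonneg hw 7, pow_nonneg hw 6, pow_nonneg hw 5, pow_nonneg hw 4,
      pow_nonneg hw 3, sq_nonneg (m-5), hw]
  have hq : (0:ℝ) ≤ (m^4+m^3-28*m^2+56*m-32)*(a1+a2)^2
      + 2*(-2*m^4+14*m^3-28*m^2+16*m)*(a1+a2)*b + (4*m^4-12*m^3-16*m^2+80*m-64)*b^2 := by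
    nlinarith [sq_nonneg ((m^4+m^3-28*m^2+56*m-32)*(a1+a2) + (-2*m^4+14*m^3-28*m^2+16*m)*b),
      mul_nonneg hdet (sq_nonneg b), hAD]
  nlinarith [mul_nonneg (div_nonneg (by linarith : (0:ℝ) ≤ 2*m-4) hm0.le)
      (sq_nonneg (s + m*(a1+a2)/(2*m-4))),
    mul_nonneg (div_nonneg (by norm_num : (0:ℝ) ≤ 1)
      (by positivity : (0:ℝ) ≤ 2*m*(3*m-4)*(m-2)))
      (add_nonneg (mul_nonneg hbeta (sq_nonneg (a1-a2))) hq)]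

open Matrix Finset

section Aux

lemma slapAux_exists_eigenvector {V : Type*} [Fintype V] [DecidableEq V]
    (M : Matrix V V ℝ) {μ : ℝ} (h : μ ∈ spectrum ℝ M) :
    ∃ x : V → ℝ, x ≠ 0 ∧ M *ᵥ x = μ • x := by
  rw [← AlgEquiv.spectrum_eq (Matrix.toLinAlgEquiv (Pi.basisFun ℝ V)) M,
    ← Module.End.hasEigenvalue_iff_mem_spectrum] at h
  obtain ⟨x, hx⟩ := h.exists_hasEigenvector
  refine ⟨x, hx.right, ?_⟩
  have h2 := hx.apply_eq_smul
  rw [Matrix.toLinAlgEquiv_apply] at h2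
  rw [← h2]
  ext i
  simp [Matrix.mulVec, dotProduct, Pi.basisFun_repr, Pi.single_apply, mul_ite, eq_comm]

lemma slapAux_sum_bound {V : Type*} [Fintype V] [DecidableEq V] (F : V → V → ℝ)
    (h0 : ∀ i j, 0 ≤ F i j) (hsymm : ∀ i j, F i j = F j i) (S : Finset V) :
    2 * (∑ i ∈ S, ∑ j, F i j) - (∑ i ∈ S, ∑ j ∈ S, F i j) ≤ ∑ i, ∑ j, F i j := by
  have h1 : (∑ i ∈ S, ∑ j, F i j) + (∑ i ∈ Sᶜ, ∑ j, F i j) = ∑ i, ∑ j, F i j :=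
    Finset.sum_add_sum_compl S _
  have h3 : ∑ i ∈ Sᶜ, ∑ j ∈ S, F i j ≤ ∑ i ∈ Sᶜ, ∑ j, F i j :=
    Finset.sum_le_sum fun i _ =>
      Finset.sum_le_sum_of_subset_of_nonneg (Finset.subset_univ S) fun j _ _ => h0 i j
  have h4 : ∑ i ∈ Sᶜ, ∑ j ∈ S, F i j = ∑ j ∈ S, (∑ i, F j i - ∑ i ∈ S, F j i) := by
    rw [Finset.sum_comm]
    refine Finset.sum_congr rfl fun j _ => ?_
    have h5 : (∑ i ∈ S, F j i) + (∑ i ∈ Sᶜ, F j i) = ∑ i, F j i := Finset.sum_add_sum_compl S _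
    have e : ∑ i ∈ Sᶜ, F i j = ∑ i ∈ Sᶜ, F j i := Finset.sum_congr rfl fun i _ => hsymm i j
    linarith [e.symm]
  rw [Finset.sum_sub_distrib] at h4
  linarith [h1, h3, h4]

lemma slapAux_dominating_of_degree {V : Type*} [Fintype V] [DecidableEq V] (G : SimpleGraph V)
    [DecidableRel G.Adj] {n : ℕ} (hn : Fintype.card V = n) {u : V}
    (hu : G.degree u = n - 1) {w : V} (hw : w ≠ u) : G.Adj u w := by
  have hsub : G.neighborFinset u ⊆ Finset.univ.erase u := by
    intro y hy
    rw [SimpleGraph.mem_neighborFinset] at hy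
    exact Finset.mem_erase.mpr ⟨hy.ne', Finset.mem_univ y⟩
  have hcard : (Finset.univ.erase u).card ≤ (G.neighborFinset u).card := by
    rw [Finset.card_erase_of_mem (Finset.mem_univ u), Finset.card_univ, hn,
      G.card_neighborFinset_eq_degree, hu]
  have heq := Finset.eq_of_subset_of_card_le hsub hcard
  have hmem : w ∈ G.neighborFinset u := by
    rw [heq]; exact Finset.mem_erase.mpr ⟨hw, Finset.mem_univ w⟩
  rwa [SimpleGraph.mem_neighborFinset] at hmem

lemma slapAux_unique_nonneighbor {V : Type*} [Fintype V] [DecidableEq V] (G : SimpleGraph V)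
    [DecidableRel G.Adj] {n : ℕ} (hn : Fintype.card V = n) {v : V}
    (hv : G.degree v = n - 2) (h2 : 2 ≤ n) :
    ∃ w0 : V, w0 ≠ v ∧ ¬ G.Adj v w0 ∧ ∀ w : V, w ≠ v → w ≠ w0 → G.Adj v w := by
  have hsub : G.neighborFinset v ⊆ Finset.univ.erase v := by
    intro y hy
    rw [SimpleGraph.mem_neighborFinset] at hy
    exact Finset.mem_erase.mpr ⟨hy.ne', Finset.mem_univ y⟩
  have hcard : ((Finset.univ.erase v) \ G.neighborFinset v).card = 1 := by
    rw [Finset.card_sdiff_of_subset hsub, Finset.card_erase_of_mem (Finset.mem_univ v),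
      Finset.card_univ, hn, G.card_neighborFinset_eq_degree, hv]
    omega
  obtain ⟨w0, hw0⟩ := Finset.card_eq_one.mp hcard
  have hmem : w0 ∈ (Finset.univ.erase v) \ G.neighborFinset v := by
    rw [hw0]; exact Finset.mem_singleton_self w0
  rw [Finset.mem_sdiff, Finset.mem_erase, SimpleGraph.mem_neighborFinset] at hmem
  refine ⟨w0, hmem.1.1, hmem.2, fun w hwv hww0 => ?_⟩
  by_contra hadj
  have hmem2 : w ∈ (Finset.univ.erase v) \ G.neighborFinset v := by
    rw [Finset.mem_sdiff, Finset.mem_erase, SimpleGraph.mem_neighborFinset]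
    exact ⟨⟨hwv, Finset.mem_univ w⟩, hadj⟩
  rw [hw0, Finset.mem_singleton] at hmem2
  exact hww0 hmem2

end Aux
/-- The signless Laplacian matrix `Q(G) = D(G) + A(G)` of a simple graph, over `ℝ`. -/
def SimpleGraph.signlessLap {V : Type*} [Fintype V] [DecidableEq V] (G : SimpleGraph V)
    [DecidableRel G.Adj] : Matrix V V ℝ :=
  G.degMatrix ℝ + G.adjMatrix ℝ

open SimpleGraph in
lemma slapAux_signlessLap_quadform {V : Type*} [Fintype V] [DecidableEq V] (G : SimpleGraph V)
    [DecidableRel G.Adj] (x : V → ℝ) :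
    x ⬝ᵥ (G.signlessLap *ᵥ x) =
      (∑ i : V, ∑ j : V, if G.Adj i j then (x i + x j)^2 else 0) / 2 := by
  simp_rw [SimpleGraph.signlessLap, add_mulVec, dotProduct_add, dotProduct_mulVec_degMatrix,
    dotProduct_mulVec_adjMatrix, ← sum_add_distrib, degree_eq_sum_if_adj, sum_mul, ite_mul,
    one_mul, zero_mul, ← sum_add_distrib, ite_add_ite, add_zero]
  rw [← add_self_div_two (∑ x_1 : V, ∑ x_2 : V, _)]
  conv_lhs => enter [1,2,2,i,2,j]; rw [if_congr (G.adj_comm i j) rfl rfl]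
  conv_lhs => enter [1,2]; rw [Finset.sum_comm]
  simp_rw [← sum_add_distrib, ite_add_ite]
  congr 2 with i
  congr 2 with j
  ring_nf

/-- For a graph of order `n ≥ 7` with exactly `k ∈ {1,2}` vertices of degree `n-1`
and at least one vertex of degree `n-2`, every signless Laplacian eigenvalue is at
least `2k/(n-2)`. -/
theorem signlessLap_least_eigenvalue_k_dominating_bound
    {V : Type*} [Fintype V] [DecidableEq V] (G : SimpleGraph V) [DecidableRel G.Adj]
    (n : ℕ) (hn : Fintype.card V = n) (h7 : 7 ≤ n)
    (k : ℕ) (hk : (Finset.univ.filter fun v => G.degree v = n - 1).card = k)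
    (hk12 : k = 1 ∨ k = 2)
    (hdeg : ∃ v : V, G.degree v = n - 2) :
    ∀ μ ∈ spectrum ℝ G.signlessLap, 2 * (k : ℝ) / ((n : ℝ) - 2) ≤ μ := by
  intro μ hμ
  obtain ⟨x, hx0, hxe⟩ := slapAux_exists_eigenvector G.signlessLap hμ
  have hdot : x ⬝ᵥ x = ∑ i, (x i)^2 := by simp [dotProduct, sq]
  have hxx0 : (0:ℝ) ≤ x ⬝ᵥ x := by rw [hdot]; positivity
  have hxx : (0:ℝ) < x ⬝ᵥ x :=
    lt_of_le_of_ne hxx0 fun h => hx0 (dotProduct_self_eq_zero.mp h.symm)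
  have heig : x ⬝ᵥ (G.signlessLap *ᵥ x) = μ * (x ⬝ᵥ x) := by
    rw [hxe, dotProduct_smul, smul_eq_mul]
  suffices h : 2*(k:ℝ)/((n:ℝ)-2) * (x ⬝ᵥ x) ≤ x ⬝ᵥ (G.signlessLap *ᵥ x) by
    rw [heig] at h
    exact le_of_mul_le_mul_right h hxx
  have h7' : (7:ℝ) ≤ (n:ℝ) := by exact_mod_cast h7
  set m : ℝ := (n:ℝ) - 2 with hmdef
  have hm5 : 5 ≤ m := by rw [hmdef]; linarith
  obtain ⟨v, hv⟩ := hdeg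
  obtain ⟨w0, hw0v, hw0adj, hvadj⟩ := slapAux_unique_nonneighbor G hn hv (by omega)
  have hquad := slapAux_signlessLap_quadform G x
  set F : V → V → ℝ := fun i j => if G.Adj i j then (x i + x j)^2 else 0 with hFdef
  have hF0 : ∀ i j, 0 ≤ F i j := by
    intro i j
    simp only [hFdef]
    split
    · positivity
    · exact le_refl 0
  have hFadj : ∀ i j, G.Adj i j → F i j = (x i + x j)^2 := fun i j h => if_pos h
  have hFnadj : ∀ i j, ¬ G.Adj i j → F i j = 0 := fun i j h => if_neg h
  have hFsymm : ∀ i j, F i j = F j i := by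
    intro i j
    by_cases h : G.Adj i j
    · rw [hFadj i j h, hFadj j i h.symm, add_comm]
    · rw [hFnadj i j h, hFnadj j i fun hc => h hc.symm]
  rcases hk12 with hk1 | hk1
  · -- k = 1
    subst hk1
    obtain ⟨u, hu⟩ := Finset.card_eq_one.mp hk
    have hudeg : G.degree u = n - 1 := by
      have hmem : u ∈ Finset.univ.filter (fun w => G.degree w = n - 1) := by
        rw [hu]; exact Finset.mem_singleton_self u
      exact (Finset.mem_filter.mp hmem).2
    have hadj_u : ∀ w : V, w ≠ u → G.Adj u w :=
      fun w hw => slapAux_dominating_of_degree G hn hudeg hw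
    have hvu : v ≠ u := by
      intro h; rw [h, hudeg] at hv; omega
    have hadjuv : G.Adj u v := hadj_u v hvu
    have hw0u : w0 ≠ u := by
      intro h; exact hw0adj (h ▸ hadjuv.symm)
    set T : Finset V := {u, v, w0} with hTdef
    set W : Finset V := Finset.univ \ T with hWdef
    have hTcard : T.card = 3 := by
      rw [hTdef, Finset.card_insert_of_notMem (by simp [Ne.symm hvu, Ne.symm hw0u]),
        Finset.card_insert_of_notMem (by simp [Ne.symm hw0v]), Finset.card_singleton]
    have hWcard : W.card = n - 3 := by
      rw [hWdef, Finset.card_sdiff_of_subset (Finset.subset_univ T), Finset.card_univ, hn, hTcard]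
    have hWmem : ∀ j ∈ W, j ≠ u ∧ j ≠ v ∧ j ≠ w0 := by
      intro j hj
      rw [hWdef, Finset.mem_sdiff] at hj
      have h2 := hj.2
      rw [hTdef] at h2
      simp only [Finset.mem_insert, Finset.mem_singleton] at h2
      push_neg at h2
      exact h2
    have hsplit : ∀ f : V → ℝ, ∑ j, f j = ∑ j ∈ W, f j + ∑ j ∈ T, f j := by
      intro f; rw [hWdef]; exact (Finset.sum_sdiff (Finset.subset_univ T)).symm
    have hTsum : ∀ f : V → ℝ, ∑ j ∈ T, f j = f u + f v + f w0 := by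
      intro f
      rw [hTdef, Finset.sum_insert (by simp [Ne.symm hvu, Ne.symm hw0u]),
        Finset.sum_insert (by simp [Ne.symm hw0v]), Finset.sum_singleton]
      ring
    have hrowu : ∑ j, F u j = (∑ j ∈ W, (x u + x j)^2) + ((x u + x v)^2 + (x u + x w0)^2) := by
      rw [hsplit (F u), hTsum (F u),
        Finset.sum_congr rfl fun j hj => hFadj u j (hadj_u j (hWmem j hj).1),
        hFnadj u u (G.irrefl), hFadj u v hadjuv, hFadj u w0 (hadj_u w0 hw0u)]
      ring
    have hrowv : ∑ j, F v j = (∑ j ∈ W, (x v + x j)^2) + (x u + x v)^2 := by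
      rw [hsplit (F v), hTsum (F v),
        Finset.sum_congr rfl fun j hj => hFadj v j (hvadj j (hWmem j hj).2.1 (hWmem j hj).2.2),
        hFadj v u hadjuv.symm, hFnadj v v (G.irrefl), hFnadj v w0 hw0adj]
      ring
    have hxxsplit : x ⬝ᵥ x = (∑ j ∈ W, (x j)^2) + ((x u)^2 + (x v)^2 + (x w0)^2) := by
      rw [hdot, hsplit (fun j => (x j)^2), hTsum (fun j => (x j)^2)]
    have hSB := slapAux_sum_bound F hF0 hFsymm {u, v}
    rw [Finset.sum_insert (by simp [Ne.symm hvu]), Finset.sum_singleton] at hSB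
    have hSS : ∑ i ∈ ({u, v}:Finset V), ∑ j ∈ ({u, v}:Finset V), F i j
        = 2*(x u + x v)^2 := by
      rw [Finset.sum_insert (by simp [Ne.symm hvu]), Finset.sum_singleton,
        Finset.sum_insert (by simp [Ne.symm hvu]), Finset.sum_singleton,
        Finset.sum_insert (by simp [Ne.symm hvu]), Finset.sum_singleton,
        hFnadj u u (G.irrefl), hFadj u v hadjuv, hFadj v u hadjuv.symm, hFnadj v v (G.irrefl)]
      ring
    rw [hSS] at hSB
    have hperw : ∑ j ∈ W, (2/m*(x j)^2
          + ((x u)^2 + (x v)^2 - (x u + x v)^2/(2 - 2/m)))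
        ≤ ∑ j ∈ W, ((x u + x j)^2 + (x v + x j)^2) :=
      Finset.sum_le_sum fun j _ => slapAux_perw1 m (x u) (x v) (x j) hm5
    have hsplit2 : ∑ j ∈ W, ((x u + x j)^2 + (x v + x j)^2)
        = (∑ j ∈ W, (x u + x j)^2) + (∑ j ∈ W, (x v + x j)^2) := Finset.sum_add_distrib
    have hcastW : ((W.card : ℕ) : ℝ) = m - 1 := by
      rw [hWcard, hmdef]
      have h3 : (3:ℕ) ≤ n := by omega
      rw [Nat.cast_sub h3]
      push_cast
      ring
    have hconst : ∑ j ∈ W, (2/m*(x j)^2 + ((x u)^2 + (x v)^2 - (x u + x v)^2/(2 - 2/m)))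
        = 2/m * (∑ j ∈ W, (x j)^2)
          + (m-1)*((x u)^2 + (x v)^2 - (x u + x v)^2/(2 - 2/m)) := by
      rw [Finset.sum_add_distrib, Finset.sum_const, ← Finset.mul_sum, nsmul_eq_mul, hcastW]
    have hfin := slapAux_final1 m (x u) (x v) (x w0) hm5
    have hquad' : x ⬝ᵥ (G.signlessLap *ᵥ x) = (∑ i, ∑ j, F i j)/2 := hquad
    rw [hquad', hxxsplit]
    push_cast
    linarith [hSB, hrowu, hrowv, hperw, hsplit2, hconst, hfin]
  · -- k = 2
    subst hk1
    obtain ⟨u1, u2, hu12, hu⟩ := Finset.card_eq_two.mp hk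
    have hudeg1 : G.degree u1 = n - 1 := by
      have hmem : u1 ∈ Finset.univ.filter (fun w => G.degree w = n - 1) := by
        rw [hu]; simp
      exact (Finset.mem_filter.mp hmem).2
    have hudeg2 : G.degree u2 = n - 1 := by
      have hmem : u2 ∈ Finset.univ.filter (fun w => G.degree w = n - 1) := by
        rw [hu]; simp
      exact (Finset.mem_filter.mp hmem).2
    have hadj_u1 : ∀ w : V, w ≠ u1 → G.Adj u1 w :=
      fun w hw => slapAux_dominating_of_degree G hn hudeg1 hw
    have hadj_u2 : ∀ w : V, w ≠ u2 → G.Adj u2 w :=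
      fun w hw => slapAux_dominating_of_degree G hn hudeg2 hw
    have hvu1 : v ≠ u1 := by
      intro h; rw [h, hudeg1] at hv; omega
    have hvu2 : v ≠ u2 := by
      intro h; rw [h, hudeg2] at hv; omega
    have hadj12 : G.Adj u1 u2 := hadj_u1 u2 (Ne.symm hu12)
    have hadjuv1 : G.Adj u1 v := hadj_u1 v hvu1
    have hadjuv2 : G.Adj u2 v := hadj_u2 v hvu2
    have hw0u1 : w0 ≠ u1 := by
      intro h; exact hw0adj (h ▸ hadjuv1.symm)
    have hw0u2 : w0 ≠ u2 := by
      intro h; exact hw0adj (h ▸ hadjuv2.symm)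
    set T : Finset V := {u1, u2, v, w0} with hTdef
    set W : Finset V := Finset.univ \ T with hWdef
    have hTcard : T.card = 4 := by
      rw [hTdef,
        Finset.card_insert_of_notMem (by simp [hu12, Ne.symm hvu1, Ne.symm hw0u1]),
        Finset.card_insert_of_notMem (by simp [Ne.symm hvu2, Ne.symm hw0u2]),
        Finset.card_insert_of_notMem (by simp [Ne.symm hw0v]), Finset.card_singleton]
    have hWcard : W.card = n - 4 := by
      rw [hWdef, Finset.card_sdiff_of_subset (Finset.subset_univ T), Finset.card_univ, hn, hTcard]
    have hWmem : ∀ j ∈ W, j ≠ u1 ∧ j ≠ u2 ∧ j ≠ v ∧ j ≠ w0 := by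
      intro j hj
      rw [hWdef, Finset.mem_sdiff] at hj
      have h2 := hj.2
      rw [hTdef] at h2
      simp only [Finset.mem_insert, Finset.mem_singleton] at h2
      push_neg at h2
      exact h2
    have hsplit : ∀ f : V → ℝ, ∑ j, f j = ∑ j ∈ W, f j + ∑ j ∈ T, f j := by
      intro f; rw [hWdef]; exact (Finset.sum_sdiff (Finset.subset_univ T)).symm
    have hTsum : ∀ f : V → ℝ, ∑ j ∈ T, f j = f u1 + f u2 + f v + f w0 := by
      intro f
      rw [hTdef,
        Finset.sum_insert (by simp [hu12, Ne.symm hvu1, Ne.symm hw0u1]),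
        Finset.sum_insert (by simp [Ne.symm hvu2, Ne.symm hw0u2]),
        Finset.sum_insert (by simp [Ne.symm hw0v]), Finset.sum_singleton]
      ring
    have hrowu1 : ∑ j, F u1 j = (∑ j ∈ W, (x u1 + x j)^2)
        + ((x u1 + x u2)^2 + (x u1 + x v)^2 + (x u1 + x w0)^2) := by
      rw [hsplit (F u1), hTsum (F u1),
        Finset.sum_congr rfl fun j hj => hFadj u1 j (hadj_u1 j (hWmem j hj).1),
        hFnadj u1 u1 (G.irrefl), hFadj u1 u2 hadj12, hFadj u1 v hadjuv1,
        hFadj u1 w0 (hadj_u1 w0 hw0u1)]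
      ring
    have hrowu2 : ∑ j, F u2 j = (∑ j ∈ W, (x u2 + x j)^2)
        + ((x u1 + x u2)^2 + (x u2 + x v)^2 + (x u2 + x w0)^2) := by
      rw [hsplit (F u2), hTsum (F u2),
        Finset.sum_congr rfl fun j hj => hFadj u2 j (hadj_u2 j (hWmem j hj).2.1),
        hFadj u2 u1 hadj12.symm, hFnadj u2 u2 (G.irrefl), hFadj u2 v hadjuv2,
        hFadj u2 w0 (hadj_u2 w0 hw0u2)]
      ring
    have hrowv : ∑ j, F v j = (∑ j ∈ W, (x v + x j)^2)
        + ((x u1 + x v)^2 + (x u2 + x v)^2) := by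
      rw [hsplit (F v), hTsum (F v),
        Finset.sum_congr rfl fun j hj => hFadj v j (hvadj j (hWmem j hj).2.2.1 (hWmem j hj).2.2.2),
        hFadj v u1 hadjuv1.symm, hFadj v u2 hadjuv2.symm, hFnadj v v (G.irrefl),
        hFnadj v w0 hw0adj]
      ring
    have hxxsplit : x ⬝ᵥ x = (∑ j ∈ W, (x j)^2)
        + ((x u1)^2 + (x u2)^2 + (x v)^2 + (x w0)^2) := by
      rw [hdot, hsplit (fun j => (x j)^2), hTsum (fun j => (x j)^2)]
    have hSB := slapAux_sum_bound F hF0 hFsymm {u1, u2, v}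
    rw [Finset.sum_insert (by simp [hu12, Ne.symm hvu1]),
      Finset.sum_insert (by simp [Ne.symm hvu2]), Finset.sum_singleton] at hSB
    have hSsum : ∀ f : V → ℝ, ∑ j ∈ ({u1, u2, v}:Finset V), f j = f u1 + f u2 + f v := by
      intro f
      rw [Finset.sum_insert (by simp [hu12, Ne.symm hvu1]),
        Finset.sum_insert (by simp [Ne.symm hvu2]), Finset.sum_singleton]
      ring
    have hSS : ∑ i ∈ ({u1, u2, v}:Finset V), ∑ j ∈ ({u1, u2, v}:Finset V), F i j
        = 2*((x u1 + x u2)^2 + (x u1 + x v)^2 + (x u2 + x v)^2) := by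
      rw [hSsum (fun i => ∑ j ∈ ({u1, u2, v}:Finset V), F i j)]
      rw [hSsum (F u1), hSsum (F u2), hSsum (F v),
        hFnadj u1 u1 (G.irrefl), hFadj u1 u2 hadj12, hFadj u1 v hadjuv1,
        hFadj u2 u1 hadj12.symm, hFnadj u2 u2 (G.irrefl), hFadj u2 v hadjuv2,
        hFadj v u1 hadjuv1.symm, hFadj v u2 hadjuv2.symm, hFnadj v v (G.irrefl)]
      ring
    rw [hSS] at hSB
    have hperw : ∑ j ∈ W, (4/m*(x j)^2
          + ((x u1)^2 + (x u2)^2 + (x v)^2 - (x u1 + x u2 + x v)^2/(3 - 4/m)))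
        ≤ ∑ j ∈ W, ((x u1 + x j)^2 + (x u2 + x j)^2 + (x v + x j)^2) :=
      Finset.sum_le_sum fun j _ => slapAux_perw2 m (x u1) (x u2) (x v) (x j) hm5
    have hsplit2 : ∑ j ∈ W, ((x u1 + x j)^2 + (x u2 + x j)^2 + (x v + x j)^2)
        = ((∑ j ∈ W, (x u1 + x j)^2) + (∑ j ∈ W, (x u2 + x j)^2))
          + (∑ j ∈ W, (x v + x j)^2) := by
      rw [← Finset.sum_add_distrib, ← Finset.sum_add_distrib]
    have hcastW : ((W.card : ℕ) : ℝ) = m - 2 := by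
      rw [hWcard, hmdef]
      have h4 : (4:ℕ) ≤ n := by omega
      rw [Nat.cast_sub h4]
      push_cast
      ring
    have hconst : ∑ j ∈ W, (4/m*(x j)^2
          + ((x u1)^2 + (x u2)^2 + (x v)^2 - (x u1 + x u2 + x v)^2/(3 - 4/m)))
        = 4/m * (∑ j ∈ W, (x j)^2)
          + (m-2)*((x u1)^2 + (x u2)^2 + (x v)^2 - (x u1 + x u2 + x v)^2/(3 - 4/m)) := by
      rw [Finset.sum_add_distrib, Finset.sum_const, ← Finset.mul_sum, nsmul_eq_mul, hcastW]
    have hfin := slapAux_final2 m (x u1) (x u2) (x v) (x w0) hm5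
    have hquad' : x ⬝ᵥ (G.signlessLap *ᵥ x) = (∑ i, ∑ j, F i j)/2 := hquad
    rw [hquad', hxxsplit]
    push_cast
    linarith [hSB, hrowu1, hrowu2, hrowv, hperw, hsplit2, hconst, hfin]
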